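/- Let ψ : ℝ → [0,∞) be Lipschitz continuous with Lipschitz constant β > 0, and let θ₀ > 0, γ > 0 and t₀ ∈ ℝ be such that ∫_{−∞}^{t} ψ(s) ds ≤ θ₀ e^{γ(t−t₀)} for all t ≤ t₀. Then ψ(t) ≤ 2√(β θ₀) e^{(γ/2)(t−t₀)} for all t ≤ t₀. -/

import Mathlib

open MeasureTheory

/-- A nonnegative Lipschitz function whose primitive on half-lines decays exponentially
must itself decay exponentially (with half the rate):
if `∫_{−∞}^t ψ ≤ θ₀ e^{γ(t−t₀)}` for all `t ≤ t₀`, then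
`ψ(t) ≤ 2√(βθ₀) e^{(γ/2)(t−t₀)}` for all `t ≤ t₀`. -/
theorem stmt_19 (ψ : ℝ → ℝ) (β θ₀ γ t₀ : ℝ)
    (hψ0 : ∀ t, 0 ≤ ψ t)
    (hβ : 0 < β)
    (hlip : ∀ s t : ℝ, |ψ t - ψ s| ≤ β * |t - s|)
    (hθ₀ : 0 < θ₀) (hγ : 0 < γ)
    (hint : ∀ t : ℝ, t ≤ t₀ → IntegrableOn ψ (Set.Iic t) volume)
    (hbound : ∀ t : ℝ, t ≤ t₀ →
      (∫ s in Set.Iic t, ψ s) ≤ θ₀ * Real.exp (γ * (t - t₀))) :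
    ∀ t : ℝ, t ≤ t₀ →
      ψ t ≤ 2 * Real.sqrt (β * θ₀) * Real.exp (γ / 2 * (t - t₀)) := by
  intro t ht
  set c := ψ t with hc
  set E := Real.exp (γ / 2 * (t - t₀)) with hE
  have hEpos : 0 < E := Real.exp_pos _
  have hRpos : 0 ≤ 2 * Real.sqrt (β * θ₀) * E := by positivity
  rcases eq_or_lt_of_le (hψ0 t) with h0 | hcpos
  · exact le_trans (le_of_eq h0.symm) hRpos
  -- a = t - c/β
  set a := t - c / β with ha
  have hat : a ≤ t := by
    have h1 : 0 ≤ c / β := le_of_lt (div_pos hcpos hβ)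
    simp only [ha]
    linarith
  -- lower bound function
  have hlow : ∀ s ∈ Set.Icc a t, (c - β * t) + β * s ≤ ψ s := by
    intro s hs
    have h1 := hlip s t
    have h2 : |t - s| = t - s := abs_of_nonneg (by linarith [hs.2])
    have h3 : ψ t - ψ s ≤ β * (t - s) := le_trans (le_abs_self _) (h2 ▸ h1)
    nlinarith
  -- compute the integral of the linear function
  have hg : (fun s => (c - β * t) + β * s) = fun s : ℝ => (c - β * t) + β * s := rfl
  have hgi1 : IntervalIntegrable (fun _ : ℝ => c - β * t) volume a t :=
    intervalIntegrable_const
  have hgi2 : IntervalIntegrable (fun s : ℝ => β * s) volume a t :=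
    (continuous_const.mul continuous_id).intervalIntegrable a t
  have hcalc : (∫ s in a..t, ((c - β * t) + β * s)) = c ^ 2 / (2 * β) := by
    rw [intervalIntegral.integral_add hgi1 hgi2, intervalIntegral.integral_const,
      intervalIntegral.integral_const_mul, integral_id, smul_eq_mul]
    have hβ' : β ≠ 0 := ne_of_gt hβ
    rw [ha]
    field_simp
    ring
  -- set integral comparison
  have hmeas : MeasurableSet (Set.Icc a t) := measurableSet_Icc
  have hψInt : IntegrableOn ψ (Set.Icc a t) volume :=
    (hint t ht).mono_set (Set.Icc_subset_Iic_self)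
  have hgInt : IntegrableOn (fun s : ℝ => (c - β * t) + β * s) (Set.Icc a t) volume :=
    (Continuous.integrableOn_Icc (by continuity))
  have hstep1 : (∫ s in Set.Icc a t, ((c - β * t) + β * s)) ≤ ∫ s in Set.Icc a t, ψ s :=
    setIntegral_mono_on hgInt hψInt hmeas hlow
  have hstep2 : (∫ s in Set.Icc a t, ψ s) ≤ ∫ s in Set.Iic t, ψ s := by
    apply setIntegral_mono_set (hint t ht)
    · exact Filter.Eventually.of_forall fun s => hψ0 s
    · exact Filter.Eventually.of_forall fun s hs => hs.2
  have heq : (∫ s in Set.Icc a t, ((c - β * t) + β * s)) = c ^ 2 / (2 * β) := by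
    rw [← hcalc, intervalIntegral.integral_of_le hat, integral_Icc_eq_integral_Ioc]
  have hkey : c ^ 2 / (2 * β) ≤ θ₀ * Real.exp (γ * (t - t₀)) := by
    calc c ^ 2 / (2 * β) = ∫ s in Set.Icc a t, ((c - β * t) + β * s) := heq.symm
      _ ≤ ∫ s in Set.Icc a t, ψ s := hstep1
      _ ≤ ∫ s in Set.Iic t, ψ s := hstep2
      _ ≤ θ₀ * Real.exp (γ * (t - t₀)) := hbound t ht
  -- finish with algebra
  have hE2 : E ^ 2 = Real.exp (γ * (t - t₀)) := by
    rw [hE, ← Real.exp_nat_mul]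
    ring_nf
  have hc2 : c ^ 2 ≤ 2 * β * θ₀ * E ^ 2 := by
    rw [hE2]
    have := hkey
    have h2β : 0 < 2 * β := by linarith
    calc c ^ 2 = (c ^ 2 / (2 * β)) * (2 * β) := by field_simp
      _ ≤ (θ₀ * Real.exp (γ * (t - t₀))) * (2 * β) := by
          exact mul_le_mul_of_nonneg_right hkey (le_of_lt h2β)
      _ = 2 * β * θ₀ * Real.exp (γ * (t - t₀)) := by ring
  have hR2 : (2 * Real.sqrt (β * θ₀) * E) ^ 2 = 4 * β * θ₀ * E ^ 2 := by
    have : Real.sqrt (β * θ₀) ^ 2 = β * θ₀ := Real.sq_sqrt (by positivity)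
    nlinarith [this]
  have hsq : c ^ 2 ≤ (2 * Real.sqrt (β * θ₀) * E) ^ 2 := by
    rw [hR2]
    nlinarith [sq_nonneg E, mul_pos hβ hθ₀, sq_nonneg E]
  calc c = Real.sqrt (c ^ 2) := (Real.sqrt_sq (le_of_lt hcpos)).symm
    _ ≤ Real.sqrt ((2 * Real.sqrt (β * θ₀) * E) ^ 2) := Real.sqrt_le_sqrt hsq
    _ = 2 * Real.sqrt (β * θ₀) * E := Real.sqrt_sq hRpos
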